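/- Let N ≥ 1, let w⁻ ∈ Δ^N with w⁻_i > 0 for all i, let g ∈ ℝ^N, and let ε > 0. Let λ ≥ 0 and let w(λ) be the exponential tilt w_i(λ) = w⁻_i exp(−λ g_i)/Z(λ), Z(λ) = ∑_j w⁻_j exp(−λ g_j), and suppose ∑_i w_i(λ) g_i = ε². Then for every w in the feasible set C = {w ∈ Δ^N : ∑_i w_i g_i ≤ ε²} the Pythagorean inequality for the I-projection onto a half-space holds: D(w‖w⁻) ≥ D(w‖w(λ)) + D(w(λ)‖w⁻). -/

import Mathlib

/-- Pythagorean inequality for the I-projection onto a half-space: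
if the exponential tilt `w(λ)` (with `λ ≥ 0`) meets the constraint with equality,
then for every feasible `w`, `D(w‖w⁻) ≥ D(w‖w(λ)) + D(w(λ)‖w⁻)`. -/
theorem iprojection_pythagorean_inequality
    (N : ℕ) (hN : 1 ≤ N) (wm g : Fin N → ℝ)
    (hwm_pos : ∀ i, 0 < wm i) (hwm_sum : ∑ i, wm i = 1)
    (ε : ℝ) (hε : 0 < ε)
    (l : ℝ) (hl : 0 ≤ l)
    (wl : Fin N → ℝ)
    (hwl : ∀ i, wl i = wm i * Real.exp (-l * g i) / ∑ j, wm j * Real.exp (-l * g j))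
    (hactive : ∑ i, wl i * g i = ε ^ 2) :
    ∀ w : Fin N → ℝ, (∀ i, 0 ≤ w i) → ∑ i, w i = 1 → ∑ i, w i * g i ≤ ε ^ 2 →
      ∑ i, w i * Real.log (w i / wl i) + ∑ i, wl i * Real.log (wl i / wm i) ≤
        ∑ i, w i * Real.log (w i / wm i) := by
  intro w hw hwsum hwfeas
  set Z := ∑ j, wm j * Real.exp (-l * g j) with hZ
  have hZpos : 0 < Z :=
    Finset.sum_pos (fun i _ => mul_pos (hwm_pos i) (Real.exp_pos _)) ⟨⟨0, hN⟩, Finset.mem_univ _⟩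
  have hwlpos : ∀ i, 0 < wl i := fun i => by
    rw [hwl i]; exact div_pos (mul_pos (hwm_pos i) (Real.exp_pos _)) hZpos
  have hlog : ∀ i, Real.log (wl i / wm i) = -l * g i - Real.log Z := by
    intro i
    have hZne := ne_of_gt hZpos
    have hwmne := ne_of_gt (hwm_pos i)
    rw [hwl i, show wm i * Real.exp (-l * g i) / Z / wm i = Real.exp (-l * g i) / Z by
      field_simp,
      Real.log_div (Real.exp_ne_zero _) (ne_of_gt hZpos), Real.log_exp]
  have hwlsum : ∑ i, wl i = 1 := by
    simp only [hwl]
    rw [← Finset.sum_div, ← hZ, div_self (ne_of_gt hZpos)]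
  have key : ∀ i, w i * Real.log (w i / wm i) - w i * Real.log (w i / wl i)
      = w i * Real.log (wl i / wm i) := by
    intro i
    rcases eq_or_lt_of_le (hw i) with h0 | hpos
    · simp [← h0]
    · rw [Real.log_div (ne_of_gt hpos) (ne_of_gt (hwm_pos i)),
        Real.log_div (ne_of_gt hpos) (ne_of_gt (hwlpos i)),
        Real.log_div (ne_of_gt (hwlpos i)) (ne_of_gt (hwm_pos i))]
      ring
  have h1 : ∑ i, w i * Real.log (w i / wm i) - ∑ i, w i * Real.log (w i / wl i)
      = -l * (∑ i, w i * g i) - Real.log Z := by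
    rw [← Finset.sum_sub_distrib]
    simp_rw [key, hlog, mul_sub]
    rw [Finset.sum_sub_distrib, ← Finset.sum_mul, hwsum]
    simp_rw [show ∀ i, w i * (-l * g i) = -l * (w i * g i) by intro i; ring]
    rw [← Finset.mul_sum]
    ring
  have h2 : ∑ i, wl i * Real.log (wl i / wm i) = -l * ε ^ 2 - Real.log Z := by
    simp_rw [hlog, mul_sub]
    rw [Finset.sum_sub_distrib, ← Finset.sum_mul, hwlsum]
    simp_rw [show ∀ i, wl i * (-l * g i) = -l * (wl i * g i) by intro i; ring]
    rw [← Finset.mul_sum, hactive]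
    ring
  have hmul : 0 ≤ l * (ε ^ 2 - ∑ i, w i * g i) :=
    mul_nonneg hl (by linarith)
  nlinarith [h1, h2, hmul]
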